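/- Let (d_i)_{i≥1} be an infinite alternate Lyndon word over the finite alphabet A = {0,1,…,d_1} and let M be the associated Lyndon system with H_n the number of words of length n in its language L_M. Then H_0 = 1 and for all n ≥ 1, H_n = Σ_{k=1}^{n} (−1)^k (d_{k−1} − d_k) H_{n−k} + 1, where d_0 = 0. -/

import Mathlib

open Filter Topology

/-- Alternate (Ito–Sadahiro) strict order on infinite sequences (0-indexed: entry `i`
is the `(i+1)`-th letter `x_{i+1}` of the paper). `altLt x y` iff at the first index
where they differ the comparison alternates with the parity of the index:
`(-1)^k (x_k - y_k) < 0` in 1-based indexing. -/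
def altLt (x y : ℕ → ℕ) : Prop :=
  ∃ k : ℕ, (∀ i < k, x i = y i) ∧ (if Even k then y k < x k else x k < y k)

def altLe (x y : ℕ → ℕ) : Prop := x = y ∨ altLt x y

def shiftSeq (x : ℕ → ℕ) (k : ℕ) : ℕ → ℕ := fun i => x (k + i)

/-- An alternate Lyndon word: smaller (in the alternate order) than all of its shifts. -/
def IsAltLyndon (d : ℕ → ℕ) : Prop := ∀ k : ℕ, altLe d (shiftSeq d k)

/-- The Lyndon system associated to `d`: sequences over the alphabet `{0, …, d_1}`
all of whose shifts dominate `d` in the alternate order. -/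
def LyndonSystem (d : ℕ → ℕ) : Set (ℕ → ℕ) :=
  {x | (∀ i, x i ≤ d 0) ∧ ∀ k : ℕ, altLe d (shiftSeq x k)}

def IsFactorOf (w : List ℕ) (x : ℕ → ℕ) : Prop :=
  ∃ k : ℕ, w = (List.range w.length).map (fun i => x (k + i))

/-- The language of the Lyndon system: finite factors of its elements. -/
def LyndonLang (d : ℕ → ℕ) : Set (List ℕ) :=
  {w | ∃ x ∈ LyndonSystem d, IsFactorOf w x}

/-- `Hword d n` is the number of words of length `n` in the language `L_M`. -/
noncomputable def Hword (d : ℕ → ℕ) (n : ℕ) : ℕ :=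
  Set.ncard {w : List ℕ | w ∈ LyndonLang d ∧ w.length = n}

/-- The topological entropy of the Lyndon system of `d` equals `h`,
i.e. `lim_{n→∞} (log H_n)/n = h`. -/
def EntropyIs (d : ℕ → ℕ) (h : ℝ) : Prop :=
  Filter.Tendsto (fun n : ℕ => Real.log (Hword d n) / n) Filter.atTop (nhds h)

/-- `dz d k` is the paper's digit `d_k` (1-based) with the convention `d_0 = 0`. -/
def dz (d : ℕ → ℕ) (k : ℕ) : ℤ := if k = 0 then 0 else (d (k - 1) : ℤ)

/- ================================================================
   Auxiliary development.
   ================================================================ -/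

namespace AltProof

attribute [local instance] Classical.propDecidable

/-! ### The alternate order on finite words -/

/-- alternate strict order on finite words (compared up to common length). -/
def wlt (u v : List ℕ) : Prop :=
  ∃ k, k < u.length ∧ k < v.length ∧ (∀ i < k, u.getD i 0 = v.getD i 0) ∧
    (if Even k then v.getD k 0 < u.getD k 0 else u.getD k 0 < v.getD k 0)

def wle (u v : List ℕ) : Prop := u = v ∨ wlt u v

lemma wle_refl (u : List ℕ) : wle u u := Or.inl rfl

lemma wlt_cons {p q : ℕ} {P Q : List ℕ} :
    wlt (p :: P) (q :: Q) ↔ q < p ∨ (p = q ∧ wlt Q P) := by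
  constructor
  · rintro ⟨k, hk1, hk2, hagree, hcond⟩
    match k with
    | 0 => simp only [if_pos (Even.zero)] at hcond; exact Or.inl hcond
    | (k+1) =>
      right
      have hpq : p = q := by have := hagree 0 (Nat.succ_pos k); simpa using this
      refine ⟨hpq, ⟨k, by simpa using hk2, by simpa using hk1, ?_, ?_⟩⟩
      · intro i hi
        have := hagree (i+1) (by omega)
        simpa using this.symm
      · have hpar : Even (k+1) ↔ ¬ Even k := Nat.even_add_one
        by_cases h : Even k
        · rw [if_pos h]
          rw [if_neg (by simpa [hpar] using h)] at hcond
          simpa using hcond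
        · rw [if_neg h]
          rw [if_pos (by simpa [hpar] using h)] at hcond
          simpa using hcond
  · rintro (h | ⟨hpq, k, hk1, hk2, hagree, hcond⟩)
    · exact ⟨0, by simp, by simp, by simp, by simpa using h⟩
    · refine ⟨k+1, by simpa using hk2, by simpa using hk1, ?_, ?_⟩
      · intro i hi
        match i with
        | 0 => simpa using hpq
        | (i+1) => have := hagree i (by omega); simpa using this.symm
      · have hpar : Even (k+1) ↔ ¬ Even k := Nat.even_add_one
        by_cases h : Even k
        · rw [if_neg (by simpa [hpar] using h)]
          rw [if_pos h] at hcond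
          simpa using hcond
        · rw [if_pos (by simpa [hpar] using h)]
          rw [if_neg h] at hcond
          simpa using hcond

lemma wle_cons {p q : ℕ} {P Q : List ℕ} :
    wle (p :: P) (q :: Q) ↔ q < p ∨ (p = q ∧ wle Q P) := by
  unfold wle
  rw [wlt_cons]
  constructor
  · rintro (h | h | h)
    · rcases List.cons_eq_cons.mp h with ⟨h1, h2⟩
      exact Or.inr ⟨h1, Or.inl h2.symm⟩
    · exact Or.inl h
    · exact Or.inr ⟨h.1, Or.inr h.2⟩
  · rintro (h | ⟨h1, (h2 | h2)⟩)
    · exact Or.inr (Or.inl h)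
    · exact Or.inl (by rw [h1, h2])
    · exact Or.inr (Or.inr ⟨h1, h2⟩)

lemma wlt_asymm {u v : List ℕ} (h1 : wlt u v) (h2 : wlt v u) : False := by
  obtain ⟨k1, hk1u, hk1v, ha1, hc1⟩ := h1
  obtain ⟨k2, hk2v, hk2u, ha2, hc2⟩ := h2
  rcases lt_trichotomy k1 k2 with h | h | h
  · have hEq := ha2 k1 h
    split_ifs at hc1 <;> omega
  · subst h
    split_ifs at hc1 hc2 <;> omega
  · have hEq := ha1 k2 h
    split_ifs at hc2 <;> omega

lemma wle_antisymm {u v : List ℕ} (h1 : wle u v) (h2 : wle v u) : u = v := by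
  rcases h1 with h | h
  · exact h
  · rcases h2 with h' | h'
    · exact h'.symm
    · exact absurd h' (fun hh => wlt_asymm h hh)

lemma wle_total {u v : List ℕ} (hl : u.length = v.length) : wle u v ∨ wle v u := by
  by_cases he : u = v
  · exact Or.inl (Or.inl he)
  · have hex : ∃ i, u.getD i 0 ≠ v.getD i 0 := by
      by_contra hc
      push_neg at hc
      exact he (List.ext_getElem hl (fun n h1 h2 => by
        have := hc n
        rwa [List.getD_eq_getElem u 0 h1, List.getD_eq_getElem v 0 h2] at this))
    classical
    have hk := Nat.find_spec hex
    set k := Nat.find hex with hkdef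
    have hmin : ∀ i < k, u.getD i 0 = v.getD i 0 := fun i hi =>
      not_ne_iff.mp (Nat.find_min hex hi)
    have hku : k < u.length := by
      by_contra hcon
      push_neg at hcon
      have h1 : u.getD k 0 = 0 := List.getD_eq_default _ _ hcon
      have h2 : v.getD k 0 = 0 := List.getD_eq_default _ _ (hl ▸ hcon)
      exact hk (h1.trans h2.symm)
    have hkv : k < v.length := hl ▸ hku
    rcases lt_trichotomy (u.getD k 0) (v.getD k 0) with hlt | heq | hgt
    · by_cases hev : Even k
      · exact Or.inr (Or.inr ⟨k, hkv, hku, fun i hi => (hmin i hi).symm,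
          by rw [if_pos hev]; exact hlt⟩)
      · exact Or.inl (Or.inr ⟨k, hku, hkv, hmin, by rw [if_neg hev]; exact hlt⟩)
    · exact absurd heq hk
    · by_cases hev : Even k
      · exact Or.inl (Or.inr ⟨k, hku, hkv, hmin, by rw [if_pos hev]; exact hgt⟩)
      · exact Or.inr (Or.inr ⟨k, hkv, hku, fun i hi => (hmin i hi).symm,
          by rw [if_neg hev]; exact hgt⟩)

lemma wlt_trans {u v w : List ℕ} (h1 : wlt u v) (h2 : wlt v w) : wlt u w := by
  obtain ⟨k1, hk1u, hk1v, ha1, hc1⟩ := h1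
  obtain ⟨k2, hk2v, hk2w, ha2, hc2⟩ := h2
  rcases lt_trichotomy k1 k2 with h | h | h
  · refine ⟨k1, hk1u, by omega, fun i hi => (ha1 i hi).trans (ha2 i (by omega)), ?_⟩
    have hEq := ha2 k1 h
    split_ifs at hc1 ⊢ <;> omega
  · subst h
    refine ⟨k1, hk1u, hk2w, fun i hi => (ha1 i hi).trans (ha2 i hi), ?_⟩
    split_ifs at hc1 hc2 ⊢ <;> omega
  · refine ⟨k2, by omega, hk2w, fun i hi => (ha1 i (by omega)).trans (ha2 i hi), ?_⟩
    have hEq := ha1 k2 h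
    split_ifs at hc2 ⊢ <;> omega

lemma wle_trans {u v w : List ℕ} (h1 : wle u v) (h2 : wle v w) : wle u w := by
  rcases h1 with rfl | h1
  · exact h2
  · rcases h2 with rfl | h2
    · exact Or.inr h1
    · exact Or.inr (wlt_trans h1 h2)

/-! ### Truncations of sequences -/

/-- truncation of the sequence `f` to its first `m` letters. -/
def listOf (f : ℕ → ℕ) (m : ℕ) : List ℕ := (List.range m).map f

@[simp] lemma length_listOf (f : ℕ → ℕ) (m : ℕ) : (listOf f m).length = m := by
  simp [listOf]

lemma getElem_listOf (f : ℕ → ℕ) {m i : ℕ} (h : i < (listOf f m).length) :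
    (listOf f m)[i] = f i := by
  simp [listOf]

lemma getD_listOf (f : ℕ → ℕ) {m i : ℕ} (h : i < m) :
    (listOf f m).getD i 0 = f i := by
  rw [List.getD_eq_getElem _ 0 (by simpa using h), getElem_listOf]

lemma listOf_congr {f g : ℕ → ℕ} (h : ∀ t, f t = g t) (m : ℕ) :
    listOf f m = listOf g m := by
  simp only [listOf]
  exact List.map_congr_left (fun t _ => h t)

lemma listOf_eq_of_agree {f g : ℕ → ℕ} {m : ℕ} (h : ∀ t < m, f t = g t) :
    listOf f m = listOf g m := by
  apply List.ext_getElem (by simp)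
  intro n h1 h2
  rw [getElem_listOf, getElem_listOf]
  exact h n (by simpa using h1)

lemma listOf_succ (f : ℕ → ℕ) (m : ℕ) :
    listOf f (m+1) = f 0 :: listOf (fun t => f (t+1)) m := by
  simp only [listOf, List.range_succ_eq_map, List.map_cons, List.map_map]
  rfl

lemma listOf_drop (f : ℕ → ℕ) (m t : ℕ) :
    (listOf f m).drop t = listOf (fun s => f (t + s)) (m - t) := by
  apply List.ext_getElem (by simp)
  intro n h1 h2
  rw [List.getElem_drop, getElem_listOf, getElem_listOf]

/-- first-difference data gives strict word inequality. -/
lemma wlt_listOf {x y : ℕ → ℕ} {m k : ℕ} (hk : k < m)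
    (hagree : ∀ i < k, x i = y i)
    (hcond : if Even k then y k < x k else x k < y k) :
    wlt (listOf x m) (listOf y m) := by
  refine ⟨k, by simpa using hk, by simpa using hk, ?_, ?_⟩
  · intro i hi
    rw [getD_listOf _ (by omega), getD_listOf _ (by omega)]
    exact hagree i hi
  · rw [getD_listOf _ hk, getD_listOf _ hk]
    exact hcond

lemma wle_listOf_of_altLe {x y : ℕ → ℕ} (h : altLe x y) (m : ℕ) :
    wle (listOf x m) (listOf y m) := by
  rcases h with rfl | ⟨k, hagree, hcond⟩
  · exact wle_refl _
  · by_cases hk : k < m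
    · exact Or.inr (wlt_listOf hk hagree hcond)
    · exact Or.inl (listOf_eq_of_agree (fun t ht => hagree t (by omega)))

/-- shifted comparison: if `x ⪯ y` and they share the first letter, then
`σ y ⪯ σ x` on any truncation. -/
lemma wle_listOf_shift {x y : ℕ → ℕ} (h : altLe x y) (h0 : x 0 = y 0) (m : ℕ) :
    wle (listOf (fun t => y (t+1)) m) (listOf (fun t => x (t+1)) m) := by
  rcases h with rfl | ⟨k, hagree, hcond⟩
  · exact wle_refl _
  · match k with
    | 0 =>
      rw [if_pos Even.zero] at hcond
      omega
    | (k+1) =>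
      by_cases hk : k < m
      · refine Or.inr (wlt_listOf hk (fun i hi => (hagree (i+1) (by omega)).symm) ?_)
        have hpar : Even (k+1) ↔ ¬ Even k := Nat.even_add_one
        by_cases hev : Even k
        · rw [if_pos hev]
          rw [if_neg (by simpa [hpar] using hev)] at hcond
          exact hcond
        · rw [if_neg hev]
          rw [if_pos (by simpa [hpar] using hev)] at hcond
          exact hcond
      · exact Or.inl (listOf_eq_of_agree (fun t ht => (hagree (t+1) (by omega)).symm))

/-! ### Admissible words -/

section DD
variable (d : ℕ → ℕ)

/-- the word `d_{i+1} d_{i+2} ... d_{i+m}` (`σ^i d` truncated to `m` letters). -/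
def dpref (i m : ℕ) : List ℕ := listOf (fun t => d (i + t)) m

@[simp] lemma length_dpref (i m : ℕ) : (dpref d i m).length = m := by simp [dpref]

lemma dpref_nil (i : ℕ) : dpref d i 0 = [] := by simp [dpref, listOf]

lemma dpref_succ (i m : ℕ) :
    dpref d i (m+1) = d i :: dpref d (i+1) m := by
  rw [dpref, listOf_succ]
  simp only [add_zero]
  congr 1
  exact listOf_congr (fun t => by ring_nf) m

lemma dpref_drop (i m t : ℕ) :
    (dpref d i m).drop t = dpref d (i + t) (m - t) := by
  rw [dpref, listOf_drop]
  exact listOf_congr (fun s => by ring_nf) _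

lemma getD_dpref {i m t : ℕ} (h : t < m) : (dpref d i m).getD t 0 = d (i + t) :=
  getD_listOf _ h

lemma getD_drop' {l : List ℕ} {t s : ℕ} (h : t + s < l.length) :
    (l.drop t).getD s 0 = l.getD (t + s) 0 := by
  rw [List.getD_eq_getElem _ 0 (by simp; omega), List.getD_eq_getElem _ 0 h]
  exact List.getElem_drop

/-- admissibility: every suffix dominates the corresponding prefix of `d`. -/
def adm : List ℕ → Prop
  | [] => True
  | (a :: u) => wle (dpref d 0 (u.length + 1)) (a :: u) ∧ adm u

@[simp] lemma adm_nil : adm d [] := trivial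

lemma adm_cons {a : ℕ} {u : List ℕ} :
    adm d (a :: u) ↔ (wle (dpref d 0 (u.length + 1)) (a :: u) ∧ adm d u) := Iff.rfl

/-- head expansion of the top admissibility condition. -/
lemma wle_dpref_cons_iff {i a : ℕ} {u : List ℕ} {m : ℕ} :
    wle (dpref d i (m + 1)) (a :: u) ↔
      a < d i ∨ (d i = a ∧ wle u (dpref d (i+1) m)) := by
  rw [dpref_succ, wle_cons]

lemma adm_iff_drop {w : List ℕ} :
    adm d w ↔ ∀ t, wle (dpref d 0 (w.length - t)) (w.drop t) := by
  induction w with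
  | nil =>
    simp only [adm_nil, true_iff]
    intro t
    simp only [List.drop_nil, List.length_nil, Nat.zero_sub]
    exact wle_refl _
  | cons a u ih =>
    rw [adm_cons, ih]
    constructor
    · rintro ⟨h0, h1⟩ t
      match t with
      | 0 => simpa using h0
      | (t+1) => simpa using h1 t
    · intro h
      refine ⟨by simpa using h 0, fun t => by simpa using h (t+1)⟩

variable {d}

lemma digit_le (hd : IsAltLyndon d) (t : ℕ) : d t ≤ d 0 := by
  rcases hd t with h | ⟨k, hagree, hcond⟩
  · have : d 0 = shiftSeq d t 0 := by rw [← h]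
    simp only [shiftSeq, add_zero] at this
    omega
  · match k with
    | 0 =>
      rw [if_pos Even.zero] at hcond
      simp only [shiftSeq, add_zero] at hcond
      omega
    | (k+1) =>
      have := hagree 0 (by omega)
      simp only [shiftSeq, add_zero] at this
      omega

lemma dpref_ge (hd : IsAltLyndon d) (i m : ℕ) : wle (dpref d 0 m) (dpref d i m) := by
  have h := wle_listOf_of_altLe (hd i) m
  have e1 : listOf d m = dpref d 0 m := listOf_congr (fun t => by rw [zero_add]) m
  have e2 : listOf (shiftSeq d i) m = dpref d i m := rfl
  rwa [e1, e2] at h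

/-- the key Lyndon flip: if `d i = d 0` then `σ^{i+1} d ⪯ σ d`. -/
lemma dpref_flip (hd : IsAltLyndon d) {i : ℕ} (h0 : d i = d 0) (m : ℕ) :
    wle (dpref d (i+1) m) (dpref d 1 m) := by
  have h := wle_listOf_shift (hd i) (by simp [shiftSeq, h0.symm]) m
  have e1 : listOf (fun t => shiftSeq d i (t+1)) m = dpref d (i+1) m :=
    listOf_congr (fun t => by simp only [shiftSeq]; ring_nf) m
  have e2 : listOf (fun t => d (t+1)) m = dpref d 1 m :=
    listOf_congr (fun t => by ring_nf) m
  rwa [e1, e2] at h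

lemma adm_dpref (hd : IsAltLyndon d) (i m : ℕ) : adm d (dpref d i m) := by
  rw [adm_iff_drop]
  intro t
  rw [dpref_drop]
  simpa using dpref_ge hd (i + t) (m - t)

end DD

/-! ### Counting -/

section Count
variable (d : ℕ → ℕ)

/-- all words of length `m` over the alphabet `{0,…,d 0}`. -/
def allW : ℕ → Finset (List ℕ)
  | 0 => {[]}
  | (m+1) => (Finset.range (d 0 + 1)).biUnion fun a => (allW m).image (a :: ·)

lemma mem_allW {m : ℕ} {w : List ℕ} :
    w ∈ allW d m ↔ w.length = m ∧ ∀ a ∈ w, a ≤ d 0 := by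
  induction m generalizing w with
  | zero =>
    simp only [allW, Finset.mem_singleton]
    constructor
    · rintro rfl; simp
    · rintro ⟨h1, _⟩; exact List.length_eq_zero_iff.mp h1
  | succ m ih =>
    simp only [allW, Finset.mem_biUnion, Finset.mem_range, Finset.mem_image]
    constructor
    · rintro ⟨a, ha, u, hu, rfl⟩
      obtain ⟨h1, h2⟩ := ih.mp hu
      refine ⟨by simp [h1], ?_⟩
      intro b hb
      rcases List.mem_cons.mp hb with rfl | hb
      · omega
      · exact h2 b hb
    · rintro ⟨h1, h2⟩
      match w with
      | (a :: u) =>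
        refine ⟨a, by have := h2 a (by simp); omega, u, ih.mpr ⟨by simpa using h1,
          fun b hb => h2 b (List.mem_cons_of_mem a hb)⟩, rfl⟩

noncomputable def Acnt (m : ℕ) : ℕ := ((allW d m).filter (adm d)).card
noncomputable def Psi (i m : ℕ) : ℕ :=
  ((allW d m).filter fun v => adm d v ∧ wle v (dpref d i m)).card
noncomputable def Phi (i m : ℕ) : ℕ :=
  ((allW d m).filter fun v => adm d v ∧ wle (dpref d i m) v).card

lemma Acnt_zero : Acnt d 0 = 1 := by
  rw [Acnt]
  have : (allW d 0).filter (adm d) = {[]} := by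
    rw [show allW d 0 = {[]} from rfl]
    rw [Finset.filter_singleton, if_pos (adm_nil d)]
  rw [this, Finset.card_singleton]

variable {d}

lemma dpref_mem_allW (hd : IsAltLyndon d) (i m : ℕ) : dpref d i m ∈ allW d m := by
  rw [mem_allW]
  refine ⟨length_dpref d i m, fun a ha => ?_⟩
  obtain ⟨t, ht, rfl⟩ := List.getElem_of_mem ha
  rw [← List.getD_eq_getElem _ 0 ht, getD_dpref d (by simpa using ht)]
  exact digit_le hd _

/-- totality + antisymmetry: `Ψ + Φ = A + 1`. -/
lemma Psi_add_Phi (hd : IsAltLyndon d) (i m : ℕ) :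
    Psi d i m + Phi d i m = Acnt d m + 1 := by
  classical
  set P := (allW d m).filter fun v => adm d v ∧ wle v (dpref d i m) with hP
  set Q := (allW d m).filter fun v => adm d v ∧ wle (dpref d i m) v with hQ
  have hunion : P ∪ Q = (allW d m).filter (adm d) := by
    rw [hP, hQ, ← Finset.filter_or]
    apply Finset.filter_congr
    intro v hv
    have hlen : v.length = m := ((mem_allW d).mp hv).1
    constructor
    · rintro (h | h) <;> exact h.1
    · intro h
      rcases wle_total (u := v) (v := dpref d i m) (by simp [hlen]) with ht | ht
      · exact Or.inl ⟨h, ht⟩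
      · exact Or.inr ⟨h, ht⟩
  have hinter : P ∩ Q = {dpref d i m} := by
    rw [hP, hQ, ← Finset.filter_and]
    apply Finset.eq_singleton_iff_unique_mem.mpr
    constructor
    · rw [Finset.mem_filter]
      exact ⟨dpref_mem_allW hd i m, ⟨adm_dpref hd i m, wle_refl _⟩,
        adm_dpref hd i m, wle_refl _⟩
    · intro v hv
      rw [Finset.mem_filter] at hv
      exact wle_antisymm hv.2.1.2 hv.2.2.2
  have := Finset.card_union_add_card_inter P Q
  rw [hunion, hinter, Finset.card_singleton] at this
  rw [Psi, Phi, Acnt, ← hP, ← hQ]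
  omega

variable (d)

/-- the partition of words of length `m+1` by their first letter. -/
lemma card_filter_succ (m : ℕ) (P : List ℕ → Prop) [DecidablePred P] :
    ((allW d (m+1)).filter P).card =
      ∑ a ∈ Finset.range (d 0 + 1), ((allW d m).filter fun u => P (a :: u)).card := by
  classical
  rw [show allW d (m+1) = (Finset.range (d 0 + 1)).biUnion
      (fun a => (allW d m).image (a :: ·)) from rfl]
  rw [Finset.filter_biUnion]
  rw [Finset.card_biUnion]
  · apply Finset.sum_congr rfl
    intro a _
    rw [Finset.filter_image, Finset.card_image_of_injective _ (List.cons_injective)]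
  · intro a _ b _ hab
    simp only [Finset.disjoint_left]
    intro w hw1 hw2
    rw [Finset.mem_filter, Finset.mem_image] at hw1 hw2
    obtain ⟨⟨u1, _, rfl⟩, _⟩ := hw1
    obtain ⟨⟨u2, _, he⟩, _⟩ := hw2
    exact hab (List.cons_eq_cons.mp he).1.symm

variable {d}

/-- peeling the first letter: `Φ_i(m+1) = d i · A_m + Ψ_{i+1}(m)`. -/
lemma Phi_succ (hd : IsAltLyndon d) (i m : ℕ) :
    Phi d i (m+1) = d i * Acnt d m + Psi d (i+1) m := by
  classical
  rw [Phi, card_filter_succ d m (fun v => adm d v ∧ wle (dpref d i (m+1)) v)]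
  have hstep : ∀ a ∈ Finset.range (d 0 + 1),
      ((allW d m).filter fun u => adm d (a :: u) ∧ wle (dpref d i (m+1)) (a :: u)).card
      = if a < d i then Acnt d m else if a = d i then Psi d (i+1) m else 0 := by
    intro a ha
    by_cases h1 : a < d i
    · rw [if_pos h1, Acnt]
      congr 1
      apply Finset.filter_congr
      intro u hu
      have hlen : u.length = m := ((mem_allW d).mp hu).1
      subst hlen
      constructor
      · rintro ⟨h, _⟩; exact (adm_cons d |>.mp h).2
      · intro h
        have hle : wle (dpref d 0 (u.length + 1)) (a :: u) := by
          rw [wle_dpref_cons_iff]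
          exact Or.inl (by have := digit_le hd i; omega)
        refine ⟨(adm_cons d).mpr ⟨hle, h⟩, ?_⟩
        rw [wle_dpref_cons_iff] ; exact Or.inl h1
    · rw [if_neg h1]
      by_cases h2 : a = d i
      · rw [if_pos h2, Psi]
        congr 1
        apply Finset.filter_congr
        intro u hu
        have hlen : u.length = m := ((mem_allW d).mp hu).1
        subst hlen
        constructor
        · rintro ⟨hadm, hle⟩
          refine ⟨(adm_cons d |>.mp hadm).2, ?_⟩
          rcases (wle_dpref_cons_iff d).mp hle with h | h
          · omega
          · exact h.2
        · rintro ⟨hadm, hle⟩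
          constructor
          · rw [adm_cons]
            refine ⟨?_, hadm⟩
            rw [wle_dpref_cons_iff]
            have hle0 : a ≤ d 0 := by subst h2; exact digit_le hd i
            rcases Nat.lt_or_ge a (d 0) with h3 | h3
            · exact Or.inl h3
            · have ha0 : a = d 0 := by omega
              refine Or.inr ⟨ha0.symm, ?_⟩
              exact wle_trans hle (dpref_flip hd (by omega) u.length)
          · rw [wle_dpref_cons_iff]
            exact Or.inr ⟨h2.symm, hle⟩
      · rw [if_neg h2]
        rw [Finset.card_eq_zero, Finset.filter_eq_empty_iff]
        intro u hu
        have hlen : u.length = m := ((mem_allW d).mp hu).1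
        subst hlen
        rintro ⟨_, hle⟩
        rw [wle_dpref_cons_iff] at hle
        rcases hle with h | h
        · omega
        · exact h2 (h.1.symm)
  rw [Finset.sum_congr rfl hstep]
  have hsplit : Finset.range (d 0 + 1) =
      Finset.range (d i) ∪ Finset.Ico (d i) (d 0 + 1) := by
    rw [Finset.range_eq_Ico, Finset.range_eq_Ico]
    rw [Finset.Ico_union_Ico_eq_Ico (by omega) (by have := digit_le hd i; omega)]
  rw [hsplit, Finset.sum_union (by
    rw [Finset.range_eq_Ico]
    exact Finset.Ico_disjoint_Ico_consecutive 0 (d i) (d 0 + 1))]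
  have hfirst : ∑ a ∈ Finset.range (d i),
      (if a < d i then Acnt d m else if a = d i then Psi d (i+1) m else 0)
        = d i * Acnt d m := by
    rw [Finset.sum_congr rfl (fun a ha => if_pos (Finset.mem_range.mp ha))]
    rw [Finset.sum_const, Finset.card_range, smul_eq_mul]
  have hsecond : ∑ a ∈ Finset.Ico (d i) (d 0 + 1),
      (if a < d i then Acnt d m else if a = d i then Psi d (i+1) m else 0)
        = Psi d (i+1) m := by
    have hmem : d i ∈ Finset.Ico (d i) (d 0 + 1) := by
      rw [Finset.mem_Ico]
      exact ⟨le_refl _, by have := digit_le hd i; omega⟩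
    rw [← Finset.add_sum_erase _ _ hmem]
    rw [if_neg (lt_irrefl _), if_pos rfl]
    have : ∀ a ∈ (Finset.Ico (d i) (d 0 + 1)).erase (d i),
        (if a < d i then Acnt d m else if a = d i then Psi d (i+1) m else 0) = 0 := by
      intro a ha
      rw [Finset.mem_erase, Finset.mem_Ico] at ha
      rw [if_neg (by omega), if_neg ha.1]
    rw [Finset.sum_congr rfl this, Finset.sum_const_zero, add_zero]
  rw [hfirst, hsecond]

lemma Psi_zero_len (i : ℕ) : Psi d i 0 = 1 := by
  rw [Psi]
  have : (allW d 0).filter (fun v => adm d v ∧ wle v (dpref d i 0)) = {[]} := by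
    rw [show allW d 0 = {[]} from rfl, Finset.filter_singleton,
      if_pos ⟨adm_nil d, by rw [dpref_nil]; exact wle_refl []⟩]
  rw [this, Finset.card_singleton]

lemma Psi_top (hd : IsAltLyndon d) (m : ℕ) : Psi d 0 m = 1 := by
  rw [Psi]
  have : (allW d m).filter (fun v => adm d v ∧ wle v (dpref d 0 m)) = {dpref d 0 m} := by
    apply Finset.eq_singleton_iff_unique_mem.mpr
    refine ⟨Finset.mem_filter.mpr ⟨dpref_mem_allW hd 0 m, adm_dpref hd 0 m, wle_refl _⟩, ?_⟩
    intro v hv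
    rw [Finset.mem_filter] at hv
    obtain ⟨hvW, hadm, hle⟩ := hv
    have hlen : v.length = m := ((mem_allW d).mp hvW).1
    have hge : wle (dpref d 0 m) v := by
      have := (adm_iff_drop d (w := v)).mp hadm 0
      simpa [hlen] using this
    exact wle_antisymm hle hge
  rw [this, Finset.card_singleton]

/-- the master recursion, in ℕ. -/
lemma master (hd : IsAltLyndon d) (i m : ℕ) :
    Psi d i (m+1) + d i * Acnt d m + Psi d (i+1) m = Acnt d (m+1) + 1 := by
  have h1 := Psi_add_Phi hd i (m+1)
  have h2 := Phi_succ hd i m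
  omega

end Count

/-! ### The ℤ algebra -/

section Alg
variable {d : ℕ → ℕ}

/-- closed form for `Ψ_i(m)` by unrolling the master recursion. -/
lemma Psi_closed (hd : IsAltLyndon d) : ∀ m i, (Psi d i m : ℤ) =
    (∑ t ∈ Finset.range m,
      (-1 : ℤ)^t * ((Acnt d (m - t) : ℤ) + 1 - (d (i + t) : ℤ) * (Acnt d (m - 1 - t) : ℤ)))
      + (-1 : ℤ)^m := by
  intro m
  induction m with
  | zero => intro i; simp [Psi_zero_len]
  | succ m ih =>
    intro i
    have hm := master hd i m
    have hm' : (Psi d i (m+1) : ℤ) =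
        (Acnt d (m+1) : ℤ) + 1 - (d i : ℤ) * (Acnt d m : ℤ) - (Psi d (i+1) m : ℤ) := by
      push_cast at hm ⊢
      linarith
    rw [hm', ih (i+1)]
    rw [Finset.sum_range_succ' (fun t => (-1 : ℤ)^t *
      ((Acnt d (m + 1 - t) : ℤ) + 1 - (d (i + t) : ℤ) * (Acnt d (m + 1 - 1 - t) : ℤ))) m]
    have hre : ∀ t ∈ Finset.range m,
        (-1 : ℤ)^(t+1) * ((Acnt d (m + 1 - (t+1)) : ℤ) + 1
          - (d (i + (t+1)) : ℤ) * (Acnt d (m + 1 - 1 - (t+1)) : ℤ))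
        = -((-1 : ℤ)^t * ((Acnt d (m - t) : ℤ) + 1
          - (d (i + 1 + t) : ℤ) * (Acnt d (m - 1 - t) : ℤ))) := by
      intro t ht
      have e1 : m + 1 - (t+1) = m - t := by omega
      have e2 : m + 1 - 1 - (t+1) = m - 1 - t := by omega
      have e3 : i + (t+1) = i + 1 + t := by omega
      rw [e1, e2, e3, pow_succ]
      ring
    rw [Finset.sum_congr rfl hre, Finset.sum_neg_distrib]
    simp only [Nat.add_sub_cancel, Nat.sub_zero, pow_zero, one_mul, add_zero, pow_succ]
    ring

noncomputable def Gs (d : ℕ → ℕ) (m : ℕ) : ℤ :=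
  ∑ t ∈ Finset.range m, (-1 : ℤ)^t * (Acnt d (m - t) : ℤ)
noncomputable def Ds (d : ℕ → ℕ) (m : ℕ) : ℤ :=
  ∑ t ∈ Finset.range m, (-1 : ℤ)^t * (d t : ℤ) * (Acnt d (m - 1 - t) : ℤ)
noncomputable def Ps (m : ℕ) : ℤ := ∑ t ∈ Finset.range m, (-1 : ℤ)^t

lemma Ps_succ (m : ℕ) : Ps (m+1) = Ps m + (-1 : ℤ)^m := Finset.sum_range_succ _ m

lemma Ps_add (m : ℕ) : Ps (m+1) + Ps m = 1 := by
  induction m with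
  | zero => simp [Ps]
  | succ m ih =>
    rw [Ps_succ (m+1), Ps_succ m]
    rw [Ps_succ m] at ih
    have : ((-1 : ℤ)^(m+1)) = -((-1 : ℤ)^m) := by rw [pow_succ]; ring
    rw [this]
    linarith

lemma Gs_succ (d : ℕ → ℕ) (m : ℕ) : Gs d (m+1) = (Acnt d (m+1) : ℤ) - Gs d m := by
  rw [Gs, Finset.sum_range_succ' (fun t => (-1 : ℤ)^t * (Acnt d (m + 1 - t) : ℤ)) m]
  have hre : ∀ t ∈ Finset.range m,
      (-1 : ℤ)^(t+1) * (Acnt d (m + 1 - (t+1)) : ℤ)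
        = -((-1 : ℤ)^t * (Acnt d (m - t) : ℤ)) := by
    intro t ht
    rw [show m + 1 - (t+1) = m - t by omega, pow_succ]
    ring
  rw [Finset.sum_congr rfl hre, Gs]
  simp only [Finset.sum_neg_distrib, Nat.sub_zero, pow_zero, one_mul]
  ring

/-- the `★` identity: `D_m = G_m + P_m + (-1)^m - 1`. -/
lemma star (hd : IsAltLyndon d) (m : ℕ) :
    Ds d m = Gs d m + Ps m + (-1 : ℤ)^m - 1 := by
  have h := Psi_closed hd m 0
  rw [Psi_top hd] at h
  have hsplit : (∑ t ∈ Finset.range m,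
      (-1 : ℤ)^t * ((Acnt d (m - t) : ℤ) + 1 - (d (0 + t) : ℤ) * (Acnt d (m - 1 - t) : ℤ)))
      = Gs d m + Ps m - Ds d m := by
    rw [Gs, Ps, Ds, ← Finset.sum_add_distrib, ← Finset.sum_sub_distrib]
    apply Finset.sum_congr rfl
    intro t ht
    rw [zero_add]
    ring
  rw [hsplit] at h
  push_cast at h
  linarith

/-- the target recursion for the counts `Acnt`. -/
lemma Acnt_rec (hd : IsAltLyndon d) (n : ℕ) (hn : 1 ≤ n) :
    (Acnt d n : ℤ) =
      (∑ k ∈ Finset.Icc 1 n,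
        (-1 : ℤ) ^ k * (dz d (k - 1) - dz d k) * (Acnt d (n - k) : ℤ)) + 1 := by
  obtain ⟨N, rfl⟩ : ∃ N, n = N + 1 := ⟨n - 1, by omega⟩
  have hIcc : Finset.Icc 1 (N+1) = Finset.Ico 1 (N+2) := by rw [show N+2 = N+1+1 from rfl, Finset.Ico_add_one_right_eq_Icc]
  have hconv : (∑ k ∈ Finset.Icc 1 (N+1),
      (-1 : ℤ) ^ k * (dz d (k - 1) - dz d k) * (Acnt d (N + 1 - k) : ℤ))
      = ∑ t ∈ Finset.range (N+1),
        (-1 : ℤ)^(1+t) * (dz d t - dz d (t+1)) * (Acnt d (N - t) : ℤ) := by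
    rw [hIcc, Finset.sum_Ico_eq_sum_range]
    apply Finset.sum_congr (by congr 1)
    intro t ht
    rw [show (1:ℕ) + t - 1 = t by omega, show N + 1 - (1 + t) = N - t by omega,
      show (1:ℕ) + t = t + 1 by omega]
  rw [hconv]
  have hsplit : ∀ t ∈ Finset.range (N+1),
      (-1 : ℤ)^(1+t) * (dz d t - dz d (t+1)) * (Acnt d (N - t) : ℤ)
      = (-1 : ℤ)^(t+1) * dz d t * (Acnt d (N - t) : ℤ)
        + (-1 : ℤ)^t * (d t : ℤ) * (Acnt d (N - t) : ℤ) := by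
    intro t ht
    have hdz : dz d (t+1) = (d t : ℤ) := by simp [dz]
    rw [hdz, show (1+t) = t+1 by omega, pow_succ]
    ring
  rw [Finset.sum_congr rfl hsplit, Finset.sum_add_distrib]
  have hD1 : ∑ t ∈ Finset.range (N+1), (-1 : ℤ)^t * (d t : ℤ) * (Acnt d (N - t) : ℤ)
      = Ds d (N+1) := by
    rw [Ds]
    apply Finset.sum_congr rfl
    intro t ht
    rw [show N + 1 - 1 - t = N - t by omega]
  have hD2 : ∑ t ∈ Finset.range (N+1), (-1 : ℤ)^(t+1) * dz d t * (Acnt d (N - t) : ℤ)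
      = Ds d N := by
    rw [Finset.sum_range_succ'
      (fun t => (-1 : ℤ)^(t+1) * dz d t * (Acnt d (N - t) : ℤ)) N]
    have h0 : (-1 : ℤ)^(0+1) * dz d 0 * (Acnt d (N - 0) : ℤ) = 0 := by simp [dz]
    rw [h0, add_zero, Ds]
    apply Finset.sum_congr rfl
    intro t ht
    have hdz : dz d (t+1) = (d t : ℤ) := by simp [dz]
    rw [hdz, show ((t+1)+1) = t+2 by rfl]
    have e : N - (t+1) = N - 1 - t := by omega
    rw [e, pow_succ, pow_succ]
    ring
  rw [hD1, hD2, star hd N, star hd (N+1)]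
  have hG : Gs d (N+1) = (Acnt d (N+1) : ℤ) - Gs d N := Gs_succ d N
  have hP1 : Ps N + (-1 : ℤ)^N = Ps (N+1) := (Ps_succ N).symm
  have hP2 : Ps (N+1) + (-1 : ℤ)^(N+1) = Ps (N+2) := (Ps_succ (N+1)).symm
  have hP3 : Ps (N+2) + Ps (N+1) = 1 := Ps_add (N+1)
  linarith

end Alg

/-! ### Identification of the language with admissible words -/

section Lang
variable {d : ℕ → ℕ}

lemma lang_eq (hd : IsAltLyndon d) (n : ℕ) :
    {w : List ℕ | w ∈ LyndonLang d ∧ w.length = n} = ↑((allW d n).filter (adm d)) := by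
  classical
  ext w
  simp only [Set.mem_setOf_eq, Finset.coe_filter, Finset.mem_coe, Set.mem_setOf_eq]
  constructor
  · rintro ⟨⟨x, hx, k, hw⟩, hlen⟩
    have hwl : w = listOf (fun i => x (k + i)) n := by rw [← hlen]; exact hw
    constructor
    · rw [mem_allW]
      refine ⟨by rw [hwl]; simp, ?_⟩
      intro a ha
      rw [hwl] at ha
      simp only [listOf, List.mem_map] at ha
      obtain ⟨i, _, rfl⟩ := ha
      exact hx.1 _
    · rw [adm_iff_drop]
      intro t
      have h1 : w.drop t = listOf (fun s => x (k + t + s)) (n - t) := by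
        rw [hwl, listOf_drop]
        exact listOf_congr (fun s => by ring_nf) _
      have h2 : w.length - t = n - t := by rw [hwl]; simp
      rw [h1, h2]
      have h3 := wle_listOf_of_altLe (hx.2 (k + t)) (n - t)
      have e1 : listOf d (n - t) = dpref d 0 (n - t) :=
        listOf_congr (fun s => by rw [zero_add]) _
      have e2 : listOf (shiftSeq x (k + t)) (n - t)
          = listOf (fun s => x (k + t + s)) (n - t) :=
        listOf_congr (fun s => rfl) _
      rwa [e1, e2] at h3
  · rintro ⟨hW, hadm⟩
    obtain ⟨hlen, hlet⟩ := (mem_allW d).mp hW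
    set P : ℕ → Prop := fun j => j ≤ n ∧ w.drop (n - j) = dpref d 0 j with hPdef
    have hP0 : P 0 := by
      constructor
      · omega
      · rw [Nat.sub_zero, ← hlen, List.drop_length]
        simp [dpref, listOf]
    set j0 := Nat.findGreatest P n with hj0def
    have hPj0 : P j0 := Nat.findGreatest_spec (Nat.zero_le n) hP0
    have hmax : ∀ m, P m → m ≤ j0 := fun m hm => Nat.le_findGreatest hm.1 hm
    set x : ℕ → ℕ := fun i => if i < n then w.getD i 0 else d (j0 + (i - n)) with hxdef
    have hxin : ∀ i (h : i < n), x i = w.getD i 0 := fun i h => if_pos h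
    have hxout : ∀ i (h : ¬ i < n), x i = d (j0 + (i - n)) := fun i h => if_neg h
    refine ⟨⟨x, ⟨?_, ?_⟩, ⟨0, ?_⟩⟩, hlen⟩
    · -- letters bounded
      intro i
      by_cases h : i < n
      · rw [hxin i h]
        have : w.getD i 0 ∈ w := by
          rw [List.getD_eq_getElem _ 0 (by omega)]
          exact List.getElem_mem _
        exact hlet _ this
      · rw [hxout i h]
        exact digit_le hd _
    · -- all shifts dominate d
      intro k
      by_cases hk : k < n
      · have hwk := (adm_iff_drop d).mp hadm k
        set m := n - k with hmdef
        have hlenk : w.length - k = m := by omega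
        rw [hlenk] at hwk
        rcases hwk with heq | hlt
        · -- the suffix equals a prefix of d; use maximal border
          have hPm : P m := ⟨by omega, by rw [show n - m = k by omega]; exact heq.symm⟩
          have hmj0 : m ≤ j0 := hmax m hPm
          have hj0n : j0 ≤ n := hPj0.1
          have hb : ∀ t, t < j0 → w.getD (n - j0 + t) 0 = d t := by
            intro t ht
            have := congrArg (fun l => l.getD t 0) hPj0.2
            rw [getD_drop' (by omega), getD_dpref d (by omega)] at this
            · simpa using this
          have hsuf : ∀ t, t < m → w.getD (k + t) 0 = d t := by
            intro t ht
            have := congrArg (fun l => l.getD t 0) heq.symm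
            rw [getD_drop' (by omega), getD_dpref d ht] at this
            simpa using this
          have hxeq : shiftSeq x k = shiftSeq d (j0 - m) := by
            funext i
            simp only [shiftSeq]
            by_cases hi : k + i < n
            · rw [hxin _ hi]
              have him : i < m := by omega
              rw [hsuf i him]
              have : d (j0 - m + i) = d i := by
                have := hb (j0 - m + i) (by omega)
                have hw2 : w.getD (n - j0 + (j0 - m + i)) 0 = w.getD (k + i) 0 := by
                  congr 1
                  omega
                rw [hw2] at this
                rw [hsuf i him] at this
                exact this.symm
              rw [this]
            · rw [hxout _ hi]
              congr 1
              omega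
          rw [hxeq]
          exact hd _
        · -- strict comparison carries over
          obtain ⟨r, hr1, hr2, hagree, hcond⟩ := hlt
          have hrm : r < m := by simpa using hr1
          right
          refine ⟨r, ?_, ?_⟩
          · intro i hi
            have := hagree i hi
            rw [getD_dpref d (by omega), getD_drop' (by omega)] at this
            simp only [zero_add] at this
            rw [shiftSeq, hxin _ (by omega)]
            exact this
          · have hc : (if Even r then (w.drop k).getD r 0 < d r
                else d r < (w.drop k).getD r 0) := by
              rw [getD_dpref d hrm] at hcond
              simpa using hcond
            rw [getD_drop' (by omega)] at hc
            rw [shiftSeq, hxin _ (by omega)] at *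
            split_ifs at hc ⊢ with hev
            · exact hc
            · exact hc
      · -- shift entirely inside the appended tail
        have hxeq : shiftSeq x k = shiftSeq d (j0 + (k - n)) := by
          funext i
          simp only [shiftSeq]
          rw [hxout _ (by omega)]
          congr 1
          omega
        rw [hxeq]
        exact hd _
    · -- w is the corresponding factor
      apply List.ext_getElem (by simp)
      intro i h1 h2
      simp only [List.getElem_map, List.getElem_range, zero_add]
      rw [hxin i (by omega), List.getD_eq_getElem _ 0 h1]

lemma Hword_eq (hd : IsAltLyndon d) (n : ℕ) : Hword d n = Acnt d n := by
  rw [Hword, lang_eq hd n, Set.ncard_coe_finset, Acnt]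

end Lang
end AltProof

/-- Proposition 1: `H_0 = 1` and
`H_n = Σ_{k=1}^{n} (−1)^k (d_{k−1} − d_k) H_{n−k} + 1` for all `n ≥ 1`. -/
theorem stmt0 (d : ℕ → ℕ) (hd : IsAltLyndon d) :
    Hword d 0 = 1 ∧ ∀ n : ℕ, 1 ≤ n →
      (Hword d n : ℤ) =
        (∑ k ∈ Finset.Icc 1 n,
          (-1 : ℤ) ^ k * (dz d (k - 1) - dz d k) * (Hword d (n - k) : ℤ)) + 1 := by
  constructor
  · rw [AltProof.Hword_eq hd 0, AltProof.Acnt_zero]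
  · intro n hn
    simp only [AltProof.Hword_eq hd]
    exact AltProof.Acnt_rec hd n hn
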